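/- Let F, O, S be finite nonempty index sets with g : F → O surjective, and let U ∈ ℝ^{F×S} be a matrix with nonnegative entries whose every row sum is strictly positive. Define E ∈ ℝ^{O×S} by E_{os} := Σ_{f : g(f)=o} U_{fs}, and define Σ_F := Uᵀ (diag(U 1_S))⁻¹ U and Σ_O := Eᵀ (diag(E 1_S))⁻¹ E, where 1_S ∈ ℝ^S is the all-ones vector. Then: (i) Σ_F − Σ_O is positive semidefinite; and (ii) if both Σ_F and Σ_O are invertible, then ‖Σ_F⁻¹‖₁ ≤ |S| · ‖Σ_O⁻¹‖₁, where ‖·‖₁ is the induced L1 operator norm. -/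

import Mathlib

open Matrix

/-- The `L1` norm of a vector: the sum of the absolute values of its entries. -/
def vecL1 {n : Type*} [Fintype n] (x : n → ℝ) : ℝ := ∑ i, |x i|

/-- The induced `L1` operator norm of a matrix: `sup_{x ≠ 0} ‖Mx‖₁ / ‖x‖₁`. -/
noncomputable def l1OpNorm {m n : Type*} [Fintype m] [Fintype n] (M : Matrix m n ℝ) : ℝ :=
  sSup ((fun x => vecL1 (M.mulVec x) / vecL1 x) '' {x : n → ℝ | x ≠ 0})

lemma vecL1_nonneg {n : Type*} [Fintype n] (x : n → ℝ) : 0 ≤ vecL1 x :=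
  Finset.sum_nonneg fun _ _ => abs_nonneg _

lemma abs_le_vecL1 {n : Type*} [Fintype n] (x : n → ℝ) (i : n) : |x i| ≤ vecL1 x :=
  Finset.single_le_sum (f := fun j => |x j|) (fun _ _ => abs_nonneg _) (Finset.mem_univ i)

lemma vecL1_pos {n : Type*} [Fintype n] {x : n → ℝ} (hx : x ≠ 0) : 0 < vecL1 x := by
  obtain ⟨i, hi⟩ := Function.ne_iff.mp hx
  exact lt_of_lt_of_le (abs_pos.mpr hi) (abs_le_vecL1 x i)

lemma l1OpNorm_le {m n : Type*} [Fintype m] [Fintype n] (M : Matrix m n ℝ) (C : ℝ) (hC : 0 ≤ C)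
    (h : ∀ x : n → ℝ, vecL1 (M.mulVec x) ≤ C * vecL1 x) : l1OpNorm M ≤ C := by
  apply Real.sSup_le _ hC
  rintro y ⟨x, hx, rfl⟩
  exact div_le_of_le_mul₀ (vecL1_nonneg x) hC (h x)

lemma vecL1_mulVec_le_col {m n : Type*} [Fintype m] [Fintype n] (M : Matrix m n ℝ) (K : ℝ)
    (hK : ∀ j, ∑ i, |M i j| ≤ K) (x : n → ℝ) : vecL1 (M.mulVec x) ≤ K * vecL1 x := by
  calc vecL1 (M.mulVec x) ≤ ∑ i, ∑ j, |M i j| * |x j| := by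
        refine Finset.sum_le_sum fun i _ => ?_
        simpa [abs_mul, mulVec, dotProduct] using Finset.abs_sum_le_sum_abs (fun j => M i j * x j) Finset.univ
    _ = ∑ j, (∑ i, |M i j|) * |x j| := by rw [Finset.sum_comm]; simp [Finset.sum_mul]
    _ ≤ ∑ j, K * |x j| := Finset.sum_le_sum fun j _ =>
        mul_le_mul_of_nonneg_right (hK j) (abs_nonneg _)
    _ = K * vecL1 x := by simp [vecL1, Finset.mul_sum]

lemma vecL1_mulVec_le {m n : Type*} [Fintype m] [Fintype n] (M : Matrix m n ℝ) (x : n → ℝ) :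
    vecL1 (M.mulVec x) ≤ (∑ i, ∑ k, |M i k|) * vecL1 x := by
  calc vecL1 (M.mulVec x) ≤ ∑ i, ∑ k, |M i k| * |x k| := by
        refine Finset.sum_le_sum fun i _ => ?_
        simpa [abs_mul, mulVec, dotProduct] using Finset.abs_sum_le_sum_abs (fun k => M i k * x k) Finset.univ
    _ ≤ ∑ i, ∑ k, |M i k| * vecL1 x := by
        refine Finset.sum_le_sum fun i _ => Finset.sum_le_sum fun k _ => ?_
        exact mul_le_mul_of_nonneg_left (abs_le_vecL1 x k) (abs_nonneg _)
    _ = (∑ i, ∑ k, |M i k|) * vecL1 x := by simp [Finset.sum_mul]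

lemma col_le_l1OpNorm {m n : Type*} [Fintype m] [Fintype n] [DecidableEq n] (M : Matrix m n ℝ)
    (j : n) : ∑ i, |M i j| ≤ l1OpNorm M := by
  have hsingle : vecL1 (Pi.single j (1:ℝ)) = 1 := by
    simp [vecL1, Pi.single_apply, apply_ite]
  have hmem : (∑ i, |M i j|) ∈ ((fun x => vecL1 (M.mulVec x) / vecL1 x) '' {x : n → ℝ | x ≠ 0}) := by
    refine ⟨Pi.single j 1, ?_, ?_⟩
    · intro h0
      have := congrFun h0 j
      simp at this
    · have h2 : M.mulVec (Pi.single j 1) = fun i => M i j := by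
        funext i; simp [mulVec_single]
      show vecL1 (M.mulVec (Pi.single j 1)) / vecL1 (Pi.single j 1) = _
      rw [h2, hsingle, div_one]
      rfl
  apply le_csSup _ hmem
  refine ⟨∑ i, ∑ k, |M i k|, ?_⟩
  rintro y ⟨x, hx, rfl⟩
  exact div_le_of_le_mul₀ (vecL1_nonneg x)
    (Finset.sum_nonneg fun i _ => Finset.sum_nonneg fun k _ => abs_nonneg _)
    (vecL1_mulVec_le M x)

lemma psd_quad {n : Type*} [Fintype n] {M : Matrix n n ℝ} (hM : M.PosSemidef) (x : n → ℝ) :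
    0 ≤ x ⬝ᵥ (M *ᵥ x) := by
  simpa using hM.dotProduct_mulVec_nonneg x

lemma quad_diag {m S : Type*} [Fintype m] [Fintype S] [DecidableEq m]
    (V : Matrix m S ℝ) (d : m → ℝ) (x : S → ℝ) :
    x ⬝ᵥ ((Vᵀ * Matrix.diagonal d * V) *ᵥ x) = ∑ i, d i * (V *ᵥ x) i ^ 2 := by
  rw [← mulVec_mulVec, ← mulVec_mulVec, dotProduct_mulVec, vecMul_transpose]
  simp [dotProduct, mulVec_diagonal, sq]
  ring_nf
  exact Finset.sum_congr rfl fun i _ => by ring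

lemma dot_symm {n : Type*} [Fintype n] {B : Matrix n n ℝ} (hB : Bᵀ = B) (u v : n → ℝ) :
    u ⬝ᵥ (B *ᵥ v) = (B *ᵥ u) ⬝ᵥ v := by
  rw [dotProduct_mulVec, ← vecMul_transpose, hB]

lemma herm_transpose {n : Type*} [Fintype n] {M : Matrix n n ℝ} (h : M.IsHermitian) : Mᵀ = M := by
  simpa [conjTranspose, Matrix.map_id', Matrix.IsSymm] using h

lemma psd_entry_bound {n : Type*} [Fintype n] [DecidableEq n] {C : Matrix n n ℝ}
    (hC : C.PosSemidef) (i j : n) : |C i j| ≤ (C i i + C j j) / 2 := by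
  have hsym : Cᵀ = C := herm_transpose hC.1
  have hji : C j i = C i j := congrFun (congrFun hsym i) j
  by_cases hij : i = j
  · subst hij
    have h0 := psd_quad hC (Pi.single i 1)
    have : 0 ≤ C i i := by
      simpa [dotProduct, mulVec, Pi.single_apply] using h0
    rw [abs_of_nonneg this]; linarith
  · have key : ∀ a b : ℝ, 0 ≤ a^2 * C i i + 2*a*b*(C i j) + b^2 * C j j := by
      intro a b
      set xab : n → ℝ := fun k => a * (Pi.single i 1 : n → ℝ) k + b * (Pi.single j 1 : n → ℝ) k with hxab
      have h := psd_quad hC xab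
      have expand : xab ⬝ᵥ (C *ᵥ xab) =
          a^2 * C i i + a*b*(C i j) + a*b*(C j i) + b^2 * C j j := by
        simp only [hxab, dotProduct, mulVec]
        simp [Pi.single_apply, mul_add, add_mul, Finset.mul_sum,
          Finset.sum_add_distrib, mul_ite, ite_mul, Finset.sum_ite_eq', hij, Ne.symm hij]
        ring
      rw [expand, hji] at h
      linarith
    have h1 := key 1 1
    have h2 := key 1 (-1)
    rw [abs_le]; constructor <;> nlinarith

lemma inv_antitone {n : Type*} [Fintype n] [DecidableEq n] {A B : Matrix n n ℝ}
    (hA : A.PosSemidef) (hB : B.PosSemidef) (hAB : (A - B).PosSemidef)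
    (hdA : IsUnit A.det) (hdB : IsUnit B.det) : (B⁻¹ - A⁻¹).PosSemidef := by
  have hAinv : (A⁻¹).PosSemidef := hA.inv
  have hBinv : (B⁻¹).PosSemidef := hB.inv
  refine PosSemidef.of_dotProduct_mulVec_nonneg (hBinv.1.sub hAinv.1) fun x => ?_
  have hBsym : Bᵀ = B := herm_transpose hB.1
  set u : n → ℝ := A⁻¹ *ᵥ x with hu
  set v : n → ℝ := B⁻¹ *ᵥ x with hv
  have hAu : A *ᵥ u = x := by
    rw [hu, mulVec_mulVec, Matrix.mul_nonsing_inv A hdA, one_mulVec]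
  have hBv : B *ᵥ v = x := by
    rw [hv, mulVec_mulVec, Matrix.mul_nonsing_inv B hdB, one_mulVec]
  have key : 0 ≤ (v - u) ⬝ᵥ (B *ᵥ (v - u)) := psd_quad hB _
  have expand : (v - u) ⬝ᵥ (B *ᵥ (v - u)) =
      v ⬝ᵥ (B *ᵥ v) - 2 * (u ⬝ᵥ (B *ᵥ v)) + u ⬝ᵥ (B *ᵥ u) := by
    have h1 : v ⬝ᵥ (B *ᵥ u) = u ⬝ᵥ (B *ᵥ v) := by
      rw [dot_symm hBsym, dotProduct_comm]
    rw [mulVec_sub, sub_dotProduct, dotProduct_sub, dotProduct_sub, h1]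
    ring
  have hvBv : v ⬝ᵥ (B *ᵥ v) = x ⬝ᵥ v := by rw [hBv]; exact dotProduct_comm _ _
  have huBv : u ⬝ᵥ (B *ᵥ v) = u ⬝ᵥ x := by rw [hBv]
  have hux : u ⬝ᵥ x = x ⬝ᵥ u := dotProduct_comm _ _
  have huBu_le : u ⬝ᵥ (B *ᵥ u) ≤ u ⬝ᵥ x := by
    have h := psd_quad hAB u
    rw [sub_mulVec, dotProduct_sub] at h
    have : u ⬝ᵥ (A *ᵥ u) = u ⬝ᵥ x := by rw [hAu]
    linarith
  have goal_eq : x ⬝ᵥ ((B⁻¹ - A⁻¹) *ᵥ x) = x ⬝ᵥ v - x ⬝ᵥ u := by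
    rw [sub_mulVec, dotProduct_sub, ← hu, ← hv]
  rw [star_trivial, goal_eq]
  rw [expand, hvBv, huBv, hux] at key
  linarith

/-- Multi-step vs. single-step revealing (Appendix F.1, memoryless behavior policy):
`Σ_O ⪯ Σ_F` and, when both are invertible, `‖Σ_F⁻¹‖₁ ≤ |S| ‖Σ_O⁻¹‖₁`. -/
theorem multi_step_revealing_of_single_step
    {F O S : Type*} [Fintype F] [Fintype O] [Fintype S]
    [DecidableEq F] [DecidableEq O] [DecidableEq S]
    [Nonempty F] [Nonempty O] [Nonempty S]
    (g : F → O) (hg : Function.Surjective g)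
    (U : Matrix F S ℝ) (hU : ∀ f s, 0 ≤ U f s)
    (hrow : ∀ f, 0 < ∑ s, U f s)
    (E : Matrix O S ℝ)
    (hE : ∀ o s, E o s = ∑ f ∈ Finset.univ.filter (fun f => g f = o), U f s)
    (SigF SigO : Matrix S S ℝ)
    (hSigF : SigF = Uᵀ * (Matrix.diagonal (U.mulVec (fun _ => 1)))⁻¹ * U)
    (hSigO : SigO = Eᵀ * (Matrix.diagonal (E.mulVec (fun _ => 1)))⁻¹ * E) :
    (SigF - SigO).PosSemidef ∧
      (IsUnit SigF.det → IsUnit SigO.det →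
        l1OpNorm SigF⁻¹ ≤ (Fintype.card S : ℝ) * l1OpNorm SigO⁻¹) := by
  classical
  set r : F → ℝ := fun f => ∑ s, U f s with hrdef
  have hr : ∀ f, 0 < r f := hrow
  set R : O → ℝ := fun o => ∑ f ∈ Finset.univ.filter (fun f => g f = o), r f with hRdef
  have hR : ∀ o, 0 < R o := by
    intro o
    obtain ⟨f0, hf0⟩ := hg o
    refine Finset.sum_pos (fun f _ => hr f) ⟨f0, ?_⟩
    simp [hf0]
  have hU1 : U.mulVec (fun _ => (1:ℝ)) = r := by
    funext f; simp [mulVec, dotProduct, hrdef]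
  have hE1 : E.mulVec (fun _ => (1:ℝ)) = R := by
    funext o
    simp only [mulVec, dotProduct, hRdef, hE, mul_one, hrdef]
    rw [Finset.sum_comm]
  have hdiagF : (Matrix.diagonal r)⁻¹ = Matrix.diagonal (fun f => (r f)⁻¹) :=
    Matrix.inv_eq_right_inv (by
      rw [Matrix.diagonal_mul_diagonal, ← Matrix.diagonal_one]
      exact congrArg Matrix.diagonal (funext fun f => mul_inv_cancel₀ (hr f).ne'))
  have hSigF' : SigF = Uᵀ * Matrix.diagonal (fun f => (r f)⁻¹) * U := by
    rw [hSigF, hU1, hdiagF]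
  have hdiagO : (Matrix.diagonal R)⁻¹ = Matrix.diagonal (fun o => (R o)⁻¹) :=
    Matrix.inv_eq_right_inv (by
      rw [Matrix.diagonal_mul_diagonal, ← Matrix.diagonal_one]
      exact congrArg Matrix.diagonal (funext fun o => mul_inv_cancel₀ (hR o).ne'))
  have hSigO' : SigO = Eᵀ * Matrix.diagonal (fun o => (R o)⁻¹) * E := by
    rw [hSigO, hE1, hdiagO]
  have quadF : ∀ x : S → ℝ, x ⬝ᵥ (SigF *ᵥ x) = ∑ f, (r f)⁻¹ * ((U.mulVec x) f)^2 := by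
    intro x; rw [hSigF']; exact quad_diag U _ x
  have quadO : ∀ x : S → ℝ, x ⬝ᵥ (SigO *ᵥ x) = ∑ o, (R o)⁻¹ * ((E.mulVec x) o)^2 := by
    intro x; rw [hSigO']; exact quad_diag E _ x
  have hb : ∀ (x : S → ℝ) (o : O),
      (E.mulVec x) o = ∑ f ∈ Finset.univ.filter (fun f => g f = o), (U.mulVec x) f := by
    intro x o
    simp only [mulVec, dotProduct, hE, Finset.sum_mul]
    rw [Finset.sum_comm]
  have hermD : (Matrix.diagonal (fun f : F => (r f)⁻¹)).IsHermitian :=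
    isHermitian_diagonal_of_self_adjoint _ (by funext f; simp)
  have hermD' : (Matrix.diagonal (fun o : O => (R o)⁻¹)).IsHermitian :=
    isHermitian_diagonal_of_self_adjoint _ (by funext o; simp)
  have hermF : SigF.IsHermitian := by
    rw [hSigF']
    have := isHermitian_conjTranspose_mul_mul U hermD
    rwa [conjTranspose_eq_transpose_of_trivial] at this
  have hermO : SigO.IsHermitian := by
    rw [hSigO']
    have := isHermitian_conjTranspose_mul_mul E hermD'
    rwa [conjTranspose_eq_transpose_of_trivial] at this
  -- key quadratic form inequality
  have hquad_le : ∀ x : S → ℝ, x ⬝ᵥ (SigO *ᵥ x) ≤ x ⬝ᵥ (SigF *ᵥ x) := by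
    intro x
    rw [quadF, quadO]
    rw [← Finset.sum_fiberwise Finset.univ g (fun f => (r f)⁻¹ * ((U.mulVec x) f)^2)]
    refine Finset.sum_le_sum fun o _ => ?_
    rw [hb x o, inv_mul_eq_div]
    calc (∑ f ∈ Finset.univ.filter (fun f => g f = o), (U.mulVec x) f)^2 / R o
        ≤ ∑ f ∈ Finset.univ.filter (fun f => g f = o), ((U.mulVec x) f)^2 / r f := by
          exact Finset.sq_sum_div_le_sum_sq_div _ _ (fun f _ => hr f)
      _ = ∑ f ∈ Finset.univ.filter (fun f => g f = o), (r f)⁻¹ * ((U.mulVec x) f)^2 := by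
          exact Finset.sum_congr rfl fun f _ => (div_eq_inv_mul _ _)
  have hpsdF : SigF.PosSemidef := by
    refine PosSemidef.of_dotProduct_mulVec_nonneg hermF fun x => ?_
    rw [star_trivial, quadF]
    exact Finset.sum_nonneg fun f _ => mul_nonneg (inv_nonneg.mpr (hr f).le) (sq_nonneg _)
  have hpsdO : SigO.PosSemidef := by
    refine PosSemidef.of_dotProduct_mulVec_nonneg hermO fun x => ?_
    rw [star_trivial, quadO]
    exact Finset.sum_nonneg fun o _ => mul_nonneg (inv_nonneg.mpr (hR o).le) (sq_nonneg _)
  have hdiff : (SigF - SigO).PosSemidef := by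
    refine PosSemidef.of_dotProduct_mulVec_nonneg (hermF.sub hermO) fun x => ?_
    rw [star_trivial, sub_mulVec, dotProduct_sub, sub_nonneg]
    exact hquad_le x
  refine ⟨hdiff, fun hdetF hdetO => ?_⟩
  -- part (ii)
  set C : Matrix S S ℝ := SigF⁻¹ with hCdef
  set D : Matrix S S ℝ := SigO⁻¹ with hDdef
  have hCpsd : C.PosSemidef := hpsdF.inv
  have hDpsd : D.PosSemidef := hpsdO.inv
  have hinv : (D - C).PosSemidef := inv_antitone hpsdF hpsdO hdiff hdetF hdetO
  set L : ℝ := l1OpNorm D with hLdef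
  have hDdiag : ∀ i, D i i ≤ L := by
    intro i
    calc D i i ≤ |D i i| := le_abs_self _
      _ ≤ ∑ k, |D k i| := Finset.single_le_sum (f := fun k => |D k i|)
          (fun _ _ => abs_nonneg _) (Finset.mem_univ i)
      _ ≤ L := col_le_l1OpNorm D i
  have hL0 : 0 ≤ L := by
    obtain ⟨j⟩ := ‹Nonempty S›
    exact le_trans (Finset.sum_nonneg fun i _ => abs_nonneg _) (col_le_l1OpNorm D j)
  have hCD : ∀ i, C i i ≤ D i i := by
    intro i
    have h := psd_quad hinv (Pi.single i 1)
    have : (Pi.single i 1 : S → ℝ) ⬝ᵥ ((D - C) *ᵥ (Pi.single i 1)) = D i i - C i i := by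
      simp [dotProduct, mulVec, Pi.single_apply, Matrix.sub_apply]
    rw [this] at h
    linarith
  have colbound : ∀ j, ∑ i, |C i j| ≤ (Fintype.card S : ℝ) * L := by
    intro j
    calc ∑ i, |C i j| ≤ ∑ i, (C i i + C j j) / 2 :=
          Finset.sum_le_sum fun i _ => psd_entry_bound hCpsd i j
      _ ≤ ∑ i, (D i i + D j j) / 2 := by
          refine Finset.sum_le_sum fun i _ => ?_
          have h1 := hCD i
          have h2 := hCD j
          linarith
      _ ≤ ∑ i : S, (L + L) / 2 := by
          refine Finset.sum_le_sum fun i _ => ?_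
          have h1 := hDdiag i
          have h2 := hDdiag j
          linarith
      _ = (Fintype.card S : ℝ) * L := by
          rw [Finset.sum_const, Finset.card_univ, nsmul_eq_mul]
          ring
  exact l1OpNorm_le C _ (mul_nonneg (Nat.cast_nonneg _) hL0)
    (vecL1_mulVec_le_col C _ colbound)
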